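/- Fix h > 0 and σ > 0 with u_*(h, σ²) > σ², where u_*(h,ε) := ε²(e^{(1+ε)h} − 1 − εh)/(1 + εh − e^{−(1+ε)h}). Then there is a unique ε̃ ∈ (0, σ²) with u_*(h, ε̃) = σ²; moreover u_*(h,ε) − σ² has the same sign as ε − ε̃ for all ε ∈ (0, σ²). -/

import Mathlib

noncomputable def Gf (h σ : ℝ) (ε : ℝ) : ℝ :=
  ε ^ 2 * (Real.exp ((1 + ε) * h) - 1 - ε * h) -
    σ ^ 2 * (1 + ε * h - Real.exp (-(1 + ε) * h))

noncomputable def Gf' (h σ : ℝ) (ε : ℝ) : ℝ :=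
  2 * ε * (Real.exp ((1 + ε) * h) - 1 - ε * h)
    + ε ^ 2 * (h * Real.exp ((1 + ε) * h) - h)
    - σ ^ 2 * (h + h * Real.exp (-(1 + ε) * h))

noncomputable def Gf'' (h σ : ℝ) (ε : ℝ) : ℝ :=
  2 * (Real.exp ((1 + ε) * h) - 1 - ε * h)
    + 4 * ε * (h * Real.exp ((1 + ε) * h) - h)
    + ε ^ 2 * (h ^ 2 * Real.exp ((1 + ε) * h))
    + σ ^ 2 * (h ^ 2 * Real.exp (-(1 + ε) * h))

lemma expA_hasDeriv (h ε : ℝ) :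
    HasDerivAt (fun ε : ℝ => Real.exp ((1 + ε) * h)) (h * Real.exp ((1 + ε) * h)) ε := by
  have h1 : HasDerivAt (fun ε : ℝ => (1 + ε) * h) h ε := by
    simpa using ((hasDerivAt_id ε).const_add 1).mul_const h
  simpa [mul_comm] using h1.exp

lemma expB_hasDeriv (h ε : ℝ) :
    HasDerivAt (fun ε : ℝ => Real.exp (-(1 + ε) * h)) (-h * Real.exp (-(1 + ε) * h)) ε := by
  have h1 : HasDerivAt (fun ε : ℝ => -(1 + ε) * h) (-h) ε := by
    have := (((hasDerivAt_id ε).const_add 1).neg).mul_const h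
    simpa using this
  simpa [mul_comm] using h1.exp

lemma Gf_hasDeriv (h σ ε : ℝ) : HasDerivAt (Gf h σ) (Gf' h σ ε) ε := by
  have hA := expA_hasDeriv h ε
  have hB := expB_hasDeriv h ε
  have hx2 : HasDerivAt (fun ε : ℝ => ε ^ 2) (2 * ε) ε := by
    simpa using hasDerivAt_pow 2 ε
  have hxh : HasDerivAt (fun ε : ℝ => ε * h) h ε := by
    simpa using (hasDerivAt_id ε).mul_const h
  have hN : HasDerivAt (fun ε : ℝ => Real.exp ((1 + ε) * h) - 1 - ε * h)
      (h * Real.exp ((1 + ε) * h) - h) ε := by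
    exact (hA.sub_const 1).sub hxh
  have hD : HasDerivAt (fun ε : ℝ => 1 + ε * h - Real.exp (-(1 + ε) * h))
      (h - (-h * Real.exp (-(1 + ε) * h))) ε := (hxh.const_add 1).sub hB
  have := (hx2.mul hN).sub (hD.const_mul (σ ^ 2))
  convert this using 1 <;> try rfl
  unfold Gf'
  ring

lemma Gf'_hasDeriv (h σ ε : ℝ) : HasDerivAt (Gf' h σ) (Gf'' h σ ε) ε := by
  have hA := expA_hasDeriv h ε
  have hB := expB_hasDeriv h ε
  have hx2 : HasDerivAt (fun ε : ℝ => ε ^ 2) (2 * ε) ε := by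
    simpa using hasDerivAt_pow 2 ε
  have hxh : HasDerivAt (fun ε : ℝ => ε * h) h ε := by
    simpa using (hasDerivAt_id ε).mul_const h
  have hN : HasDerivAt (fun ε : ℝ => Real.exp ((1 + ε) * h) - 1 - ε * h)
      (h * Real.exp ((1 + ε) * h) - h) ε := by
    exact (hA.sub_const 1).sub hxh
  have h1 : HasDerivAt (fun ε : ℝ => 2 * ε * (Real.exp ((1 + ε) * h) - 1 - ε * h))
      (2 * (Real.exp ((1 + ε) * h) - 1 - ε * h) + 2 * ε * (h * Real.exp ((1 + ε) * h) - h)) ε := by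
    have h2 : HasDerivAt (fun ε : ℝ => 2 * ε) 2 ε := by
      simpa using (hasDerivAt_id ε).const_mul 2
    exact h2.mul hN
  have h3 : HasDerivAt (fun ε : ℝ => h * Real.exp ((1 + ε) * h) - h)
      (h * (h * Real.exp ((1 + ε) * h))) ε := ((hA.const_mul h).sub_const h)
  have h4 : HasDerivAt (fun ε : ℝ => ε ^ 2 * (h * Real.exp ((1 + ε) * h) - h))
      (2 * ε * (h * Real.exp ((1 + ε) * h) - h) + ε ^ 2 * (h * (h * Real.exp ((1 + ε) * h)))) ε :=
    hx2.mul h3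
  have h5 : HasDerivAt (fun ε : ℝ => σ ^ 2 * (h + h * Real.exp (-(1 + ε) * h)))
      (σ ^ 2 * (h * (-h * Real.exp (-(1 + ε) * h)))) ε :=
    ((hB.const_mul h).const_add h).const_mul (σ ^ 2)
  have := (h1.add h4).sub h5
  convert this using 1 <;> try rfl
  unfold Gf''
  ring

theorem stmt_6 (h σ : ℝ) (hh : 0 < h) (hσ : 0 < σ) (u : ℝ → ℝ)
    (hu : ∀ ε : ℝ, u ε =
      ε ^ 2 * (Real.exp ((1 + ε) * h) - 1 - ε * h) /
        (1 + ε * h - Real.exp (-(1 + ε) * h)))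
    (hgt : u (σ ^ 2) > σ ^ 2) :
    ∃! εt : ℝ, εt ∈ Set.Ioo 0 (σ ^ 2) ∧ u εt = σ ^ 2 ∧
      ∀ ε ∈ Set.Ioo (0 : ℝ) (σ ^ 2),
        (u ε - σ ^ 2 < 0 ↔ ε < εt) ∧ (0 < u ε - σ ^ 2 ↔ εt < ε) := by
  have hσ2 : (0:ℝ) < σ ^ 2 := by positivity
  -- denominator positivity
  have hDpos : ∀ ε : ℝ, 0 ≤ ε → 0 < 1 + ε * h - Real.exp (-(1 + ε) * h) := by
    intro ε hε
    have h1 : Real.exp (-(1 + ε) * h) < 1 := by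
      rw [Real.exp_lt_one_iff]
      nlinarith
    nlinarith [mul_nonneg hε hh.le]
  -- relation between Gf and u
  have hkey : ∀ ε : ℝ, 0 ≤ ε →
      Gf h σ ε = (u ε - σ ^ 2) * (1 + ε * h - Real.exp (-(1 + ε) * h)) := by
    intro ε hε
    have hD := (hDpos ε hε).ne'
    rw [hu ε]
    unfold Gf
    rw [sub_mul, div_mul_cancel₀ _ hD]
  -- Gf 0 < 0
  have hG0 : Gf h σ 0 < 0 := by
    have h1 : Real.exp (-(1 + 0) * h) < 1 := by
      rw [Real.exp_lt_one_iff]; nlinarith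
    simp only [Gf]
    nlinarith
  -- Gf (σ^2) > 0
  have hGσ : 0 < Gf h σ (σ ^ 2) := by
    rw [hkey _ hσ2.le]
    exact mul_pos (by linarith) (hDpos _ hσ2.le)
  -- convexity of Gf on Ici 0
  have hderiv : deriv (Gf h σ) = Gf' h σ := funext fun x => (Gf_hasDeriv h σ x).deriv
  have hcx : ConvexOn ℝ (Set.Ici (0:ℝ)) (Gf h σ) := by
    apply convexOn_of_deriv2_nonneg' (convex_Ici 0)
    · intro x _
      exact (Gf_hasDeriv h σ x).differentiableAt.differentiableWithinAt
    · intro x _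
      rw [hderiv]
      exact (Gf'_hasDeriv h σ x).differentiableAt.differentiableWithinAt
    · intro x hx
      have hx0 : (0:ℝ) ≤ x := hx
      have : deriv^[2] (Gf h σ) x = Gf'' h σ x := by
        have : deriv (deriv (Gf h σ)) x = Gf'' h σ x := by
          rw [hderiv]; exact (Gf'_hasDeriv h σ x).deriv
        simpa [Function.iterate_succ, Function.iterate_zero, Function.comp] using this
      rw [this]
      unfold Gf''
      have hA : (0:ℝ) < (1 + x) * h := by nlinarith
      have e1 : 1 + (1 + x) * h ≤ Real.exp ((1 + x) * h) := by linarith [Real.add_one_le_exp ((1 + x) * h)]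
      have e2 : (0:ℝ) < Real.exp (-(1 + x) * h) := Real.exp_pos _
      have e3 : (0:ℝ) < Real.exp ((1 + x) * h) := Real.exp_pos _
      nlinarith [mul_nonneg hx0 hh.le, sq_nonneg x, sq_nonneg σ,
        mul_nonneg (mul_nonneg hx0 hh.le) (mul_nonneg hx0 hh.le),
        mul_pos (Real.exp_pos (-(1 + x) * h)) (mul_pos hh hh),
        mul_nonneg (sq_nonneg x) (mul_nonneg (sq_nonneg h) e3.le),
        mul_nonneg (mul_nonneg hx0 hh.le) (sub_nonneg.2 (by nlinarith : (1:ℝ) ≤ Real.exp ((1 + x) * h)))]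
  -- existence of a root of Gf in Ioo 0 (σ^2)
  have hcont : ContinuousOn (Gf h σ) (Set.Icc 0 (σ ^ 2)) := by
    apply Continuous.continuousOn
    have : ∀ x, HasDerivAt (Gf h σ) (Gf' h σ x) x := Gf_hasDeriv h σ
    exact continuous_iff_continuousAt.2 fun x => (this x).continuousAt
  obtain ⟨εt, hεt, hGεt⟩ := intermediate_value_Ioo hσ2.le hcont ⟨hG0, hGσ⟩
  -- sign lemma: for ε in Ioo, sign of Gf
  have hsignlt : ∀ ε : ℝ, 0 < ε → ε < εt → Gf h σ ε < 0 := by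
    intro ε hε hlt
    have hεtpos := hεt.1
    have hb : ε / εt ∈ Set.Ioo (0:ℝ) 1 := ⟨div_pos hε hεtpos, (div_lt_one hεtpos).2 hlt⟩
    have ha : 0 < 1 - ε / εt := by linarith [hb.2]
    have := hcx.2 (Set.self_mem_Ici) (le_of_lt hεtpos : (0:ℝ) ≤ εt) ha.le hb.1.le (by ring)
    have hcomb : (1 - ε / εt) • (0:ℝ) + (ε / εt) • εt = ε := by
      field_simp
      simp [smul_eq_mul]
      field_simp
    rw [hcomb] at this
    rw [hGεt] at this
    have : Gf h σ ε ≤ (1 - ε / εt) * Gf h σ 0 := by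
      simpa [smul_eq_mul] using this
    nlinarith
  have hsigngt : ∀ ε : ℝ, εt < ε → ε < σ ^ 2 → 0 < Gf h σ ε := by
    intro ε hlt hε2
    by_contra hcon
    push_neg at hcon
    have hεpos : 0 < ε := lt_trans hεt.1 hlt
    have hb : εt / ε ∈ Set.Ioo (0:ℝ) 1 := ⟨div_pos hεt.1 hεpos, (div_lt_one hεpos).2 hlt⟩
    have ha : 0 < 1 - εt / ε := by linarith [hb.2]
    have := hcx.2 (Set.self_mem_Ici) (le_of_lt hεpos : (0:ℝ) ≤ ε) ha.le hb.1.le (by ring)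
    have hcomb : (1 - εt / ε) • (0:ℝ) + (εt / ε) • ε = εt := by
      field_simp
      simp [smul_eq_mul]
      field_simp
    rw [hcomb] at this
    have h2 : Gf h σ εt ≤ (1 - εt / ε) * Gf h σ 0 + (εt / ε) * Gf h σ ε := by
      simpa [smul_eq_mul] using this
    rw [hGεt] at h2
    nlinarith [mul_nonpos_of_nonneg_of_nonpos hb.1.le hcon]
  -- translate Gf sign to u sign
  have husign : ∀ ε : ℝ, 0 < ε →
      ((u ε - σ ^ 2 < 0 ↔ Gf h σ ε < 0) ∧ (0 < u ε - σ ^ 2 ↔ 0 < Gf h σ ε)) := by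
    intro ε hε
    have hD := hDpos ε hε.le
    have hk := hkey ε hε.le
    constructor
    · constructor
      · intro h1; rw [hk]; exact mul_neg_of_neg_of_pos h1 hD
      · intro h1; nlinarith
    · constructor
      · intro h1; rw [hk]; exact mul_pos h1 hD
      · intro h1; nlinarith
  have huεt : u εt = σ ^ 2 := by
    have hk := hkey εt hεt.1.le
    have hD := hDpos εt hεt.1.le
    rw [hGεt] at hk
    have : u εt - σ ^ 2 = 0 := by
      rcases mul_eq_zero.1 hk.symm with h1 | h1
      · exact h1
      · exact absurd h1 hD.ne'
    linarith
  refine ⟨εt, ⟨hεt, huεt, ?_⟩, ?_⟩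
  · intro ε hε
    obtain ⟨hu1, hu2⟩ := husign ε hε.1
    constructor
    · constructor
      · intro h1
        rcases lt_trichotomy ε εt with h2 | h2 | h2
        · exact h2
        · exfalso; rw [h2, huεt] at h1; linarith
        · exfalso
          have := hsigngt ε h2 hε.2
          have := hu2.2 this
          linarith [hu1.1 h1]
      · intro h1
        exact hu1.2 (hsignlt ε hε.1 h1)
    · constructor
      · intro h1
        rcases lt_trichotomy εt ε with h2 | h2 | h2
        · exact h2
        · exfalso; rw [← h2, huεt] at h1; linarith
        · exfalso
          have := hsignlt ε hε.1 h2
          have := hu1.2 this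
          linarith [hu2.1 h1]
      · intro h1
        exact hu2.2 (hsigngt ε h1 hε.2)
  · rintro y ⟨hy, huy, hsy⟩
    have := hsy εt hεt
    have h1 : ¬ (εt < y) := by
      intro hc
      have := (this.1).2 hc
      rw [huεt] at this; linarith
    have h2 : ¬ (y < εt) := by
      intro hc
      have := (this.2).2 hc
      rw [huεt] at this; linarith
    linarith [not_lt.1 h1, not_lt.1 h2]
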